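/- Let a > b > 0, λ ∈ [0,1], and z ∈ ℂ with |z| < b. Then λ·Re(z/(a - z)) - Re(z/(b - z)) ≥ λ·|z|/(a - |z|) - |z|/(b - |z|). -/

import Mathlib

private lemma aux_ring_ident (a b r x : ℝ) :
    a * (a + r) * (x - r) * ((b ^ 2 - 2 * b * x + r ^ 2) * (b - r))
        - b * (b + r) * (x - r) * ((a ^ 2 - 2 * a * x + r ^ 2) * (a - r))
        = (r - x) * ((a - b) * ((r ^ 2 - a * b) ^ 2 + r * a * (r - b) ^ 2
          + r * b * (r - a) ^ 2 + 4 * a * b * r * (r - x))) := by ring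

set_option maxHeartbeats 1000000 in
theorem re_div_combination_bound (a b lam : ℝ) (z : ℂ)
    (hb : 0 < b) (hab : b < a) (hlam0 : 0 ≤ lam) (hlam1 : lam ≤ 1)
    (hz : ‖z‖ < b) :
    lam * (z / ((a : ℂ) - z)).re - (z / ((b : ℂ) - z)).re ≥
      lam * ‖z‖ / (a - ‖z‖) -
        ‖z‖ / (b - ‖z‖) := by
  set r := ‖z‖ with hr
  set x := z.re with hx
  set y := z.im with hy
  have ha0 : 0 < a := lt_trans hb hab
  have hr0 : 0 ≤ r := norm_nonneg z
  have hxr : x ≤ r := (abs_le.mp (Complex.abs_re_le_norm z)).2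
  have hxr' : -r ≤ x := (abs_le.mp (Complex.abs_re_le_norm z)).1
  have hsq : x ^ 2 + y ^ 2 = r ^ 2 := by
    rw [hr, Complex.sq_norm, Complex.normSq_apply, ← hx, ← hy]; ring
  have hrb : r < b := hz
  have hra : r < a := lt_trans hrb hab
  -- compute the real part of z/(c - z)
  have hre : ∀ c : ℝ, r < c →
      (z / ((c : ℂ) - z)).re = (c * x - r ^ 2) / (c ^ 2 - 2 * c * x + r ^ 2) := by
    intro c hc
    rw [Complex.div_re, Complex.normSq_apply]
    simp only [Complex.sub_re, Complex.sub_im, Complex.ofReal_re, Complex.ofReal_im, ← hx, ← hy]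
    have hd1 : (c - x) * (c - x) + (0 - y) * (0 - y) = c ^ 2 - 2 * c * x + r ^ 2 := by
      linear_combination hsq
    rw [hd1, ← add_div]
    congr 1
    linear_combination -hsq
  have key : ∀ c : ℝ, r < c →
      (c * x - r ^ 2) / (c ^ 2 - 2 * c * x + r ^ 2) - r / (c - r)
        = c * (c + r) * (x - r) / ((c ^ 2 - 2 * c * x + r ^ 2) * (c - r)) := by
    intro c hc
    have hN : 0 < c ^ 2 - 2 * c * x + r ^ 2 := by nlinarith [sq_nonneg (c - x), hsq, sq_nonneg y]
    have hc' : 0 < c - r := sub_pos.mpr hc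
    rw [div_sub_div _ _ hN.ne' hc'.ne']
    ring
  have hNa : 0 < a ^ 2 - 2 * a * x + r ^ 2 := by nlinarith [sq_nonneg (a - x), hsq, sq_nonneg y]
  have hNb : 0 < b ^ 2 - 2 * b * x + r ^ 2 := by nlinarith [sq_nonneg (b - x), hsq, sq_nonneg y]
  have hDa : 0 < (a ^ 2 - 2 * a * x + r ^ 2) * (a - r) := mul_pos hNa (by linarith)
  have hDb : 0 < (b ^ 2 - 2 * b * x + r ^ 2) * (b - r) := mul_pos hNb (by linarith)
  set ga := a * (a + r) * (x - r) / ((a ^ 2 - 2 * a * x + r ^ 2) * (a - r)) with hga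
  set gb := b * (b + r) * (x - r) / ((b ^ 2 - 2 * b * x + r ^ 2) * (b - r)) with hgb
  have hga0 : ga ≤ 0 := by
    apply div_nonpos_of_nonpos_of_nonneg _ hDa.le
    have h1 : 0 ≤ a * (a + r) := by nlinarith
    exact mul_nonpos_of_nonneg_of_nonpos h1 (by linarith)
  -- monotonicity: gb ≤ ga
  have hQ : 0 ≤ (a - b) * ((r ^ 2 - a * b) ^ 2 + r * a * (r - b) ^ 2 + r * b * (r - a) ^ 2
      + 4 * a * b * r * (r - x)) := by
    apply mul_nonneg (by linarith)
    have h1 : 0 ≤ r * a * (r - b) ^ 2 := mul_nonneg (mul_nonneg hr0 ha0.le) (sq_nonneg _)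
    have h2 : 0 ≤ r * b * (r - a) ^ 2 := mul_nonneg (mul_nonneg hr0 hb.le) (sq_nonneg _)
    have h3 : 0 ≤ 4 * a * b * r * (r - x) := by
      apply mul_nonneg
      · have : 0 ≤ 4 * a * b := by nlinarith
        exact mul_nonneg this hr0
      · linarith
    nlinarith [sq_nonneg (r ^ 2 - a * b)]
  have hprod := mul_nonneg (sub_nonneg.mpr hxr) hQ
  have hmono : gb ≤ ga := by
    rw [hga, hgb, div_le_div_iff₀ hDb hDa]
    have hE := aux_ring_ident a b r x
    linarith [hprod, hE]
  have hlamga : gb ≤ lam * ga := by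
    have : ga ≤ lam * ga := by nlinarith [mul_nonneg (sub_nonneg.mpr hlam1) (neg_nonneg.mpr hga0)]
    linarith
  rw [ge_iff_le, hre a hra, hre b hrb]
  have e1 : (a * x - r ^ 2) / (a ^ 2 - 2 * a * x + r ^ 2) = ga + r / (a - r) := by
    linarith [key a hra]
  have e2 : (b * x - r ^ 2) / (b ^ 2 - 2 * b * x + r ^ 2) = gb + r / (b - r) := by
    linarith [key b hrb]
  rw [e1, e2]
  have e3 : lam * r / (a - r) = lam * (r / (a - r)) := by ring
  rw [e3]
  have e4 : lam * (ga + r / (a - r)) = lam * ga + lam * (r / (a - r)) := by ring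
  rw [e4]
  linarith [hlamga]
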